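/- For H ∈ (0,1), the expected TAMSD of RL FBM over a window of length T with lag τ ∈ (0,T) decomposes as E[δ*_H(τ)] = (1/(2H+1)) (T^{2H+1} − τ^{2H+1})/(T−τ) + (1/(2H+1)) (T−τ)^{2H} − (4H/(H+1/2)) (1/(T−τ)) ∫₀^{T−τ} t^{H+1/2} (t+τ)^{H−1/2} · ₂F₁(1/2−H, 1; 3/2+H; t/(t+τ)) dt. -/

import Mathlib

open MeasureTheory Real

/-- The Gauss hypergeometric function `₂F₁(a, b; c; z)`, as a power series
`Σₙ (a)ₙ(b)ₙ/((c)ₙ n!) zⁿ` with Pochhammer symbols `(a)ₙ = ∏_{i<n} (a+i)`. -/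
noncomputable def twoF1 (a b c z : ℝ) : ℝ :=
  ∑' n : ℕ, ((∏ i ∈ Finset.range n, (a + i)) * (∏ i ∈ Finset.range n, (b + i))
    / ((∏ i ∈ Finset.range n, (c + i)) * (Nat.factorial n))) * z ^ n

/-- For RL FBM (encoded via `E[(B*_H(t))²] = t^{2H}` and the hypergeometric
covariance formula), the expected TAMSD over a window of length `T` with lag `τ ∈ (0,T)`
decomposes as
`E[δ*_H(τ)] = (1/(2H+1))(T^{2H+1} − τ^{2H+1})/(T−τ) + (1/(2H+1))(T−τ)^{2H}
  − (4H/(H+1/2))(1/(T−τ)) ∫₀^{T−τ} t^{H+1/2}(t+τ)^{H−1/2} ₂F₁(1/2−H,1;3/2+H;t/(t+τ)) dt`. -/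
theorem rlfbm_tamsd_decomposition
    {Ω : Type*} [MeasurableSpace Ω] (μ : Measure Ω) [IsProbabilityMeasure μ]
    (H T τ : ℝ) (hH : H ∈ Set.Ioo (0 : ℝ) 1) (hτ : 0 < τ) (hτT : τ < T)
    (B : ℝ → Ω → ℝ)
    (hvar : ∀ t : ℝ, 0 ≤ t → ∫ ω, (B t ω) ^ 2 ∂μ = t ^ (2 * H))
    (hcov : ∀ t : ℝ, 0 ≤ t →
      ∫ ω, B t ω * B (t + τ) ω ∂μ
        = (2 * H / (H + 1/2)) * (t + τ) ^ (H - 1/2) * t ^ (H + 1/2)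
            * twoF1 (1/2 - H) 1 (3/2 + H) (t / (t + τ)))
    (hjoint : Integrable (fun q : ℝ × Ω => (B (q.1 + τ) q.2 - B q.1 q.2) ^ 2)
      ((volume.restrict (Set.Ioc 0 (T - τ))).prod μ)) :
    ∫ ω, ((1 / (T - τ)) * ∫ t in (0 : ℝ)..(T - τ), (B (t + τ) ω - B t ω) ^ 2) ∂μ
      = (1 / (2 * H + 1)) * ((T ^ (2 * H + 1) - τ ^ (2 * H + 1)) / (T - τ))
        + (1 / (2 * H + 1)) * (T - τ) ^ (2 * H)
        - (4 * H / (H + 1/2)) * (1 / (T - τ))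
            * ∫ t in (0 : ℝ)..(T - τ), t ^ (H + 1/2) * (t + τ) ^ (H - 1/2)
                * twoF1 (1/2 - H) 1 (3/2 + H) (t / (t + τ)) := by
  obtain ⟨hH0, hH1⟩ := hH
  have ha : 0 < T - τ := sub_pos.mpr hτT
  have hk : (0:ℝ) < H + 1/2 := by linarith
  have hk0 : (4 * H / (H + 1/2)) ≠ 0 := by positivity
  -- key pointwise (a.e.) identity for the inner integral
  have key : (fun t : ℝ => ∫ ω, (B (t + τ) ω - B t ω) ^ 2 ∂μ)
      =ᵐ[volume.restrict (Set.Ioc 0 (T - τ))]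
      fun t => (t + τ) ^ (2 * H) + t ^ (2 * H) - (4 * H / (H + 1/2))
        * (t ^ (H + 1/2) * (t + τ) ^ (H - 1/2)
            * twoF1 (1/2 - H) 1 (3/2 + H) (t / (t + τ))) := by
    filter_upwards [ae_restrict_mem measurableSet_Ioc, hjoint.prod_right_ae] with t ht hint
    have ht0 : 0 < t := ht.1
    have htτ : 0 < t + τ := by linarith
    have ha2 : Integrable (fun ω => (B t ω) ^ 2) μ := by
      by_contra h
      have h0 := hvar t ht0.le
      rw [integral_undef h] at h0
      exact (Real.rpow_pos_of_pos ht0 (2 * H)).ne' h0.symm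
    have hb2 : Integrable (fun ω => (B (t + τ) ω) ^ 2) μ := by
      by_contra h
      have h0 := hvar (t + τ) htτ.le
      rw [integral_undef h] at h0
      exact (Real.rpow_pos_of_pos htτ (2 * H)).ne' h0.symm
    have hab : Integrable (fun ω => B t ω * B (t + τ) ω) μ := by
      have heq : (fun ω => B t ω * B (t + τ) ω)
          = fun ω => ((B t ω) ^ 2 + (B (t + τ) ω) ^ 2 - (B (t + τ) ω - B t ω) ^ 2) / 2 := by
        funext ω; ring
      rw [heq]
      exact ((ha2.add hb2).sub hint).div_const 2
    have hadd : Integrable (fun ω => (B (t + τ) ω) ^ 2 + (B t ω) ^ 2) μ := hb2.add ha2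
    have hmul : Integrable (fun ω => 2 * (B t ω * B (t + τ) ω)) μ := hab.const_mul 2
    have expand : (fun ω => (B (t + τ) ω - B t ω) ^ 2)
        = fun ω => (B (t + τ) ω) ^ 2 + (B t ω) ^ 2 - 2 * (B t ω * B (t + τ) ω) := by
      funext ω; ring
    rw [expand, integral_sub hadd hmul, integral_add hb2 ha2,
      integral_const_mul, hvar t ht0.le, hvar (t + τ) htτ.le, hcov t ht0.le]
    ring
  -- integrability of the pieces over (0, T-τ]
  have intA : IntegrableOn (fun t : ℝ => (t + τ) ^ (2 * H)) (Set.Ioc 0 (T - τ)) := by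
    apply (ContinuousOn.integrableOn_Icc ?_).mono_set Set.Ioc_subset_Icc_self
    refine ((continuous_id.add continuous_const).continuousOn).rpow_const fun x hx => Or.inl ?_
    have := hx.1
    intro h
    simp only [Pi.add_apply, id_eq] at h
    linarith
  have intB : IntegrableOn (fun t : ℝ => t ^ (2 * H)) (Set.Ioc 0 (T - τ)) := by
    apply (ContinuousOn.integrableOn_Icc ?_).mono_set Set.Ioc_subset_Icc_self
    exact continuousOn_id.rpow_const fun x _ => Or.inr (by positivity)
  have intFF : IntegrableOn (fun t : ℝ => ∫ ω, (B (t + τ) ω - B t ω) ^ 2 ∂μ)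
      (Set.Ioc 0 (T - τ)) := hjoint.integral_prod_left
  have intC : IntegrableOn (fun t : ℝ => t ^ (H + 1/2) * (t + τ) ^ (H - 1/2)
      * twoF1 (1/2 - H) 1 (3/2 + H) (t / (t + τ))) (Set.Ioc 0 (T - τ)) := by
    have h1 : IntegrableOn (fun t : ℝ => ((t + τ) ^ (2 * H) + t ^ (2 * H)
        - (∫ ω, (B (t + τ) ω - B t ω) ^ 2 ∂μ)) / (4 * H / (H + 1/2))) (Set.Ioc 0 (T - τ)) :=
      ((intA.add intB).sub intFF).div_const _
    apply h1.congr_fun_ae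
    filter_upwards [key] with t ht
    rw [ht, sub_sub_cancel, mul_div_cancel_left₀ _ hk0]
  -- Fubini
  have fub := MeasureTheory.integral_integral_swap
    (f := fun (t : ℝ) (ω : Ω) => (B (t + τ) ω - B t ω) ^ 2)
    (μ := volume.restrict (Set.Ioc 0 (T - τ))) (ν := μ) hjoint
  -- the two explicit rpow integrals
  have eA : ∫ t in Set.Ioc (0:ℝ) (T - τ), (t + τ) ^ (2 * H)
      = (T ^ (2 * H + 1) - τ ^ (2 * H + 1)) / (2 * H + 1) := by
    rw [← intervalIntegral.integral_of_le ha.le,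
      intervalIntegral.integral_comp_add_right (fun s => s ^ (2 * H)) τ, zero_add,
      sub_add_cancel, integral_rpow (Or.inl (by linarith))]
  have eB : ∫ t in Set.Ioc (0:ℝ) (T - τ), t ^ (2 * H)
      = (T - τ) ^ (2 * H + 1) / (2 * H + 1) := by
    rw [← intervalIntegral.integral_of_le ha.le, integral_rpow (Or.inl (by linarith)),
      Real.zero_rpow (by linarith : 2 * H + 1 ≠ 0), sub_zero]
  have hadd' : Integrable (fun t : ℝ => (t + τ) ^ (2 * H) + t ^ (2 * H))
      (volume.restrict (Set.Ioc 0 (T - τ))) := intA.add intB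
  have hmul' : Integrable (fun t : ℝ => (4 * H / (H + 1/2)) * (t ^ (H + 1/2)
      * (t + τ) ^ (H - 1/2) * twoF1 (1/2 - H) 1 (3/2 + H) (t / (t + τ))))
      (volume.restrict (Set.Ioc 0 (T - τ))) := intC.const_mul _
  calc ∫ ω, ((1 / (T - τ)) * ∫ t in (0 : ℝ)..(T - τ), (B (t + τ) ω - B t ω) ^ 2) ∂μ
      = (1 / (T - τ)) * ∫ ω, (∫ t in Set.Ioc (0:ℝ) (T - τ), (B (t + τ) ω - B t ω) ^ 2) ∂μ := by
        rw [integral_const_mul]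
        congr 1
        refine integral_congr_ae (Filter.Eventually.of_forall fun ω => ?_)
        exact intervalIntegral.integral_of_le ha.le
    _ = (1 / (T - τ)) * ∫ t in Set.Ioc (0:ℝ) (T - τ), (∫ ω, (B (t + τ) ω - B t ω) ^ 2 ∂μ) := by
        rw [fub]
    _ = (1 / (T - τ)) * ∫ t in Set.Ioc (0:ℝ) (T - τ),
          ((t + τ) ^ (2 * H) + t ^ (2 * H) - (4 * H / (H + 1/2))
            * (t ^ (H + 1/2) * (t + τ) ^ (H - 1/2)
                * twoF1 (1/2 - H) 1 (3/2 + H) (t / (t + τ)))) := by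
        rw [integral_congr_ae key]
    _ = (1 / (T - τ)) * ((T ^ (2 * H + 1) - τ ^ (2 * H + 1)) / (2 * H + 1)
          + (T - τ) ^ (2 * H + 1) / (2 * H + 1)
          - (4 * H / (H + 1/2)) * ∫ t in Set.Ioc (0:ℝ) (T - τ), t ^ (H + 1/2)
              * (t + τ) ^ (H - 1/2) * twoF1 (1/2 - H) 1 (3/2 + H) (t / (t + τ))) := by
        rw [integral_sub hadd' hmul', integral_add intA intB, integral_const_mul, eA, eB]
    _ = (1 / (2 * H + 1)) * ((T ^ (2 * H + 1) - τ ^ (2 * H + 1)) / (T - τ))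
        + (1 / (2 * H + 1)) * (T - τ) ^ (2 * H)
        - (4 * H / (H + 1/2)) * (1 / (T - τ))
            * ∫ t in (0 : ℝ)..(T - τ), t ^ (H + 1/2) * (t + τ) ^ (H - 1/2)
                * twoF1 (1/2 - H) 1 (3/2 + H) (t / (t + τ)) := by
        rw [intervalIntegral.integral_of_le ha.le]
        generalize (∫ t in Set.Ioc (0:ℝ) (T - τ), t ^ (H + 1/2) * (t + τ) ^ (H - 1/2)
            * twoF1 (1/2 - H) 1 (3/2 + H) (t / (t + τ))) = I
        rw [Real.rpow_add ha (2 * H) 1, Real.rpow_one]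
        have h2 : (2 * H + 1) ≠ 0 := by linarith
        have h3 : (T - τ) ≠ 0 := ha.ne'
        field_simp
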